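/- Consider any assignment of decisions d : V → {0,1} to the vertices of the 3^N-subdivided equality negation input graph (N ≥ 0) such that every edge satisfies the equality-negation constraint (equal inputs of the edge's two endpoints iff distinct decisions, where the input of a subdivision vertex is the input of the original endpoint of its color). Then following the closed walk through input edges (W,0)-(B,1), (B,1)-(W,2), (W,2)-(B,2), (B,2)-(W,0), (W,0)-(B,1) yields a contradiction; hence no such assignment exists. -/

import Mathlib

inductive Proc : Type where
  | B | W
deriving DecidableEq

/-- Vertices of the `m`-fold subdivision of the equality-negation input graph:
the original vertices `(p,i)` together with interior vertices of each subdivided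
input edge `e = {(B,i),(W,j)}` at positions `0 < k < m`. -/
inductive SubV (m : ℕ) : Type where
  | orig : Proc → Fin 3 → SubV m
  | inner : Fin 3 × Fin 3 → ℕ → SubV m
deriving DecidableEq

/-- The `k`-th vertex (0 ≤ k ≤ m) on the subdivision of the input edge
`e = {(B, e.1), (W, e.2)}`: position `0` is the original `B`-endpoint, position `m`
the original `W`-endpoint. -/
def pvtx (m : ℕ) (e : Fin 3 × Fin 3) (k : ℕ) : SubV m :=
  if k = 0 then .orig .B e.1 else if k = m then .orig .W e.2 else .inner e k

/-- Colors alternate along each subdivided edge, starting with `B` at position 0. -/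
def scolor {m : ℕ} : SubV m → Proc
  | .orig p _ => p
  | .inner _ k => if Even k then .B else .W

/-- A subdivision vertex inherits the input value of the original endpoint of its color. -/
def sinput {m : ℕ} : SubV m → Fin 3
  | .orig _ i => i
  | .inner e k => if Even k then e.1 else e.2

open Fin.CommRing in
/-- there is no assignment of decisions to the vertices of the 3^N-fold
subdivided equality-negation input graph such that every edge satisfies the
equality-negation constraint (equal inputs of its endpoints iff distinct decisions). -/
theorem eqneg_no_decision_assignment (N : ℕ) :
    ¬ ∃ d : SubV (3 ^ N) → Fin 2,
      ∀ e : Fin 3 × Fin 3, ∀ k < 3 ^ N,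
        (sinput (pvtx (3 ^ N) e k) = sinput (pvtx (3 ^ N) e (k + 1)) ↔
          d (pvtx (3 ^ N) e k) ≠ d (pvtx (3 ^ N) e (k + 1))) := by

  rintro ⟨d0, h0⟩
  obtain ⟨m, hmodd, hm0, d, h⟩ :
      ∃ m : ℕ, Odd m ∧ m ≠ 0 ∧ ∃ d : SubV m → Fin 2,
        ∀ e : Fin 3 × Fin 3, ∀ k < m,
          (sinput (pvtx m e k) = sinput (pvtx m e (k + 1)) ↔
            d (pvtx m e k) ≠ d (pvtx m e (k + 1))) :=
    ⟨3 ^ N, Odd.pow (by decide), by positivity, d0, h0⟩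
  clear h0 d0
  have hsin : ∀ e : Fin 3 × Fin 3, ∀ k, k ≤ m →
      sinput (pvtx m e k) = if Even k then e.1 else e.2 := by
    intro e k hk
    unfold pvtx
    rcases eq_or_ne k 0 with rfl | h0
    · simp [sinput]
    rcases eq_or_ne k m with rfl | hkm
    · simp [h0, sinput, Nat.not_even_iff_odd.mpr hmodd]
    · simp [h0, hkm, sinput]
  have key : ∀ e : Fin 3 × Fin 3, ∀ k, k < m →
      (e.1 = e.2 ↔ d (pvtx m e k) ≠ d (pvtx m e (k + 1))) := by
    intro e k hk
    have H := h e k hk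
    rw [hsin e k hk.le, hsin e (k + 1) hk] at H
    rcases Nat.even_or_odd k with he | ho
    · have h1 : ¬ Even (k + 1) := by simp [Nat.even_add_one, he]
      simpa [he, h1] using H
    · have h0 : ¬ Even k := Nat.not_even_iff_odd.mpr ho
      have h1 : Even (k + 1) := by simpa [Nat.even_add_one] using h0
      rw [if_neg h0, if_pos h1] at H
      exact (eq_comm.trans H)
  have fin2 : ∀ a b : Fin 2, a ≠ b → b = a + 1 := by decide
  -- case of distinct inputs: decisions constant along the path
  have keyne : ∀ e : Fin 3 × Fin 3, e.1 ≠ e.2 → ∀ k, k ≤ m →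
      d (pvtx m e k) = d (pvtx m e 0) := by
    intro e hne k
    induction k with
    | zero => intro _; rfl
    | succ n ih =>
        intro hk
        have hlt : n < m := hk
        have := (key e n hlt).not.mp (by simpa using hne)
        rw [not_not] at this
        rw [← this]; exact ih hlt.le
  have keyeq : ∀ e : Fin 3 × Fin 3, e.1 = e.2 → ∀ k, k ≤ m →
      d (pvtx m e k) = d (pvtx m e 0) + (k : Fin 2) := by
    intro e heq k
    induction k with
    | zero => intro _; simp
    | succ n ih =>
        intro hk
        have hlt : n < m := hk
        have hne := (key e n hlt).mp heq
        have := fin2 _ _ hne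
        rw [this, ih hlt.le]
        push_cast
        ring
  have hp0 : ∀ e : Fin 3 × Fin 3, pvtx m e 0 = .orig .B e.1 := by
    intro e; simp [pvtx]
  have hpm : ∀ e : Fin 3 × Fin 3, pvtx m e m = .orig .W e.2 := by
    intro e; simp [pvtx, hm0]
  have hm2 : (m : Fin 2) = 1 := by
    obtain ⟨t, ht⟩ := hmodd
    rw [ht]
    push_cast
    simp
  have C1 := keyne (1, 0) (by decide) m le_rfl
  have C2 := keyne (1, 2) (by decide) m le_rfl
  have C3 := keyeq (2, 2) rfl m le_rfl
  have C4 := keyne (2, 0) (by decide) m le_rfl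
  rw [hp0, hpm] at C1 C2 C3 C4
  rw [hm2] at C3
  have : d (.orig .B (2:Fin 3)) + 1 = d (.orig .B (2:Fin 3)) := by
    rw [← C3, C2, ← C1, C4]
  exact absurd this (by
    generalize d (SubV.orig Proc.B (2:Fin 3)) = a
    revert a; decide)
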